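/- Fix an odd integer m ≥ 3 and a real number L > 0. For each integer k ≥ 1 write k = j·m + r with integers j ≥ 0 and 1 ≤ r ≤ m, and define n(k) := π²·m²·(j + 1/2)²/L² if 1 ≤ r ≤ (m−1)/2, and n(k) := π²·m²·(j + 1)²/L² if (m−1)/2 < r ≤ m; set c(k) := (n(k) − π²·k²/L²)/k. Then the set of cluster points of the sequence (c(k))_{k≥1} is exactly {0} ∪ { 2π²·s/L² : s an integer with 1 ≤ s ≤ (m−1)/2 } ∪ { π²·(2t − 1)/L² : t an integer with 1 ≤ t ≤ (m−1)/2 }; in particular it has exactly m elements. -/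

import Mathlib

open Real Filter Topology

/-- Odd-`m` case of the final proposition of Section 6.1 (Neumann energies of the
equilateral `m`-star): the cluster point set is
`{0} ∪ {2π²s/L² : 1 ≤ s ≤ (m−1)/2} ∪ {π²(2t−1)/L² : 1 ≤ t ≤ (m−1)/2}`,
which has exactly `m` elements. -/
theorem stmt11 (m : ℕ) (hm : 3 ≤ m) (hodd : Odd m) (L : ℝ) (hL : 0 < L)
    (nn c : ℕ → ℝ)
    (hn : ∀ j r : ℕ, 1 ≤ r → r ≤ m →
      nn (j * m + r) = if r ≤ (m - 1) / 2
        then π ^ 2 * (m : ℝ) ^ 2 * ((j : ℝ) + 1 / 2) ^ 2 / L ^ 2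
        else π ^ 2 * (m : ℝ) ^ 2 * ((j : ℝ) + 1) ^ 2 / L ^ 2)
    (hc : ∀ k : ℕ, c k = (nn k - π ^ 2 * (k : ℝ) ^ 2 / L ^ 2) / (k : ℝ)) :
    {x : ℝ | MapClusterPt x atTop (fun n : ℕ => c (n + 1))}
      = {0} ∪ {y : ℝ | ∃ s : ℕ, 1 ≤ s ∧ s ≤ (m - 1) / 2 ∧ y = 2 * π ^ 2 * (s : ℝ) / L ^ 2}
          ∪ {y : ℝ | ∃ t : ℕ, 1 ≤ t ∧ t ≤ (m - 1) / 2 ∧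
              y = π ^ 2 * (2 * (t : ℝ) - 1) / L ^ 2}
    ∧ {x : ℝ | MapClusterPt x atTop (fun n : ℕ => c (n + 1))}.ncard = m := by
  obtain ⟨w, hw⟩ := hodd
  have hmw : m = 2 * w + 1 := by omega
  have hw1 : 1 ≤ w := by omega
  have hhw : (m - 1) / 2 = w := by omega
  have hm0 : 0 < m := by omega
  have hmr : (m : ℝ) = 2 * (w : ℝ) + 1 := by exact_mod_cast congrArg (Nat.cast : ℕ → ℝ) hmw
  have hL' : L ≠ 0 := ne_of_gt hL
  have hπ : π ≠ 0 := Real.pi_ne_zero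
  -- the limit function
  set ℓ : ℕ → ℝ := fun r =>
    π ^ 2 / L ^ 2 * ((if r ≤ (m - 1) / 2 then (m : ℝ) / 2 else (m : ℝ)) - r) * 2 with hℓ
  -- the explicit formula for c along each residue class
  have hform : ∀ r : ℕ, 1 ≤ r → r ≤ m → ∀ j : ℕ,
      c (j * m + r) = π ^ 2 / L ^ 2 * ((if r ≤ (m - 1) / 2 then (m : ℝ) / 2 else (m : ℝ)) - r)
        * (2 + ((if r ≤ (m - 1) / 2 then (m : ℝ) / 2 else (m : ℝ)) - r) / ((j : ℝ) * m + r)) := by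
    intro r hr1 hrm j
    have hr0 : (0 : ℝ) < (r : ℝ) := by exact_mod_cast hr1
    have hd : (0 : ℝ) < (j : ℝ) * m + r := by positivity
    rw [hc, hn j r hr1 hrm]
    split_ifs <;> push_cast <;> field_simp <;> ring
  -- the convergence along each residue class
  have htend : ∀ r : ℕ, 1 ≤ r → r ≤ m →
      Tendsto (fun j : ℕ => c (j * m + r)) atTop (𝓝 (ℓ r)) := by
    intro r hr1 hrm
    have h1 : Tendsto (fun j : ℕ => (j : ℝ) * m + r) atTop atTop := by
      apply tendsto_atTop_add_const_right
      apply Tendsto.atTop_mul_const (by exact_mod_cast hm0)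
      exact tendsto_natCast_atTop_atTop
    set A : ℝ := if r ≤ (m - 1) / 2 then (m : ℝ) / 2 else (m : ℝ) with hA
    have h2 : Tendsto (fun j : ℕ => (A - r) / ((j : ℝ) * m + r)) atTop (𝓝 0) := by
      simpa [div_eq_mul_inv] using (tendsto_inv_atTop_zero.comp h1).const_mul (A - (r : ℝ))
    have h3 : Tendsto (fun j : ℕ => (2 : ℝ) + (A - r) / ((j : ℝ) * m + r)) atTop (𝓝 (2 + 0)) :=
      tendsto_const_nhds.add h2
    have h4 := h3.const_mul (π ^ 2 / L ^ 2 * (A - r))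
    have he : (fun j : ℕ => c (j * m + r))
        = fun j : ℕ => π ^ 2 / L ^ 2 * (A - r) * (2 + (A - r) / ((j : ℝ) * m + r)) := by
      funext j; exact hform r hr1 hrm j
    rw [show ℓ r = π ^ 2 / L ^ 2 * (A - r) * 2 from rfl, he]
    simpa [mul_assoc] using h4
  -- each limit is a cluster point
  have hclu : ∀ r : ℕ, 1 ≤ r → r ≤ m →
      MapClusterPt (ℓ r) atTop (fun n : ℕ => c (n + 1)) := by
    intro r hr1 hrm
    have hφ : Tendsto (fun j : ℕ => j * m + r - 1) atTop atTop := by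
      apply tendsto_atTop_mono _ tendsto_id
      intro j
      have h2 : j ≤ j * m := Nat.le_mul_of_pos_right j hm0
      simp only [id_eq]
      omega
    refine MapClusterPt.of_comp hφ ?_
    have he : ((fun n : ℕ => c (n + 1)) ∘ fun j : ℕ => j * m + r - 1)
        = fun j : ℕ => c (j * m + r) := by
      funext j
      have h3 : j * m + r - 1 + 1 = j * m + r := by omega
      simp [Function.comp, h3]
    rw [he]
    exact (htend r hr1 hrm).mapClusterPt
  -- the finite set of limits
  set F : Finset ℝ := (Finset.Icc 1 m).image ℓ with hF
  have hFne : F.Nonempty :=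
    ⟨ℓ m, Finset.mem_image_of_mem ℓ (Finset.mem_Icc.mpr ⟨by omega, le_refl m⟩)⟩
  -- the cluster set equals F
  have hset : {x : ℝ | MapClusterPt x atTop (fun n : ℕ => c (n + 1))} = (F : Set ℝ) := by
    ext x
    simp only [Set.mem_setOf_eq, hF, Finset.coe_image, Set.mem_image, Finset.mem_coe,
      Finset.mem_Icc]
    constructor
    · intro hx
      by_contra hxF
      push_neg at hxF
      set G := F.image (fun y => dist x y) with hG
      have hGne : G.Nonempty := hFne.image _
      set δ := G.min' hGne with hδ
      have hδpos : 0 < δ := by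
        have hmem := G.min'_mem hGne
        rw [← hδ] at hmem
        simp only [hG, Finset.mem_image, hF, Finset.mem_Icc] at hmem
        obtain ⟨y, ⟨r, hr, rfl⟩, hyd⟩ := hmem
        have hne : x ≠ ℓ r := fun h => hxF r hr h.symm
        rw [← hyd]
        exact dist_pos.mpr hne
      have hδle : ∀ y ∈ F, δ ≤ dist x y := fun y hy =>
        Finset.min'_le _ _ (Finset.mem_image_of_mem _ hy)
      have hε : 0 < δ / 2 := by linarith
      have hall : ∀ᶠ j in atTop, ∀ r ∈ Finset.Icc 1 m,
          dist (c (j * m + r)) (ℓ r) < δ / 2 := by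
        rw [eventually_all_finset]
        intro r hr
        rw [Finset.mem_Icc] at hr
        obtain ⟨N, hN⟩ := Metric.tendsto_atTop.mp (htend r hr.1 hr.2) (δ / 2) hε
        exact eventually_atTop.mpr ⟨N, fun j hj => hN j hj⟩
      obtain ⟨N, hN⟩ := eventually_atTop.mp hall
      have hfreq := (mapClusterPt_iff_frequently.mp hx) (Metric.ball x (δ / 2))
        (Metric.ball_mem_nhds x hε)
      obtain ⟨n, hn1, hn2⟩ := (frequently_atTop.mp hfreq) (N * m)
      set r : ℕ := n % m + 1 with hr
      set j : ℕ := n / m with hj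
      have hdm : m * (n / m) + n % m = n := Nat.div_add_mod n m
      have hjr : j * m + r = n + 1 := by
        calc j * m + r = m * (n / m) + n % m + 1 := by rw [hj, hr, Nat.mul_comm]; ring
        _ = n + 1 := by rw [hdm]
      have hr1 : 1 ≤ r := by omega
      have hrm : r ≤ m := by
        have := Nat.mod_lt n hm0
        omega
      have hjN : N ≤ j := by
        rw [hj, Nat.le_div_iff_mul_le hm0]
        exact hn1
      have h5 : dist (c (n + 1)) (ℓ r) < δ / 2 := by
        rw [← hjr]
        exact hN j hjN r (Finset.mem_Icc.mpr ⟨hr1, hrm⟩)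
      have h6 : dist (c (n + 1)) x < δ / 2 := by
        simpa [Metric.mem_ball] using hn2
      have h7 : δ ≤ dist x (ℓ r) :=
        hδle _ (Finset.mem_image_of_mem ℓ (Finset.mem_Icc.mpr ⟨hr1, hrm⟩))
      have h8 : dist x (ℓ r) ≤ dist x (c (n + 1)) + dist (c (n + 1)) (ℓ r) :=
        dist_triangle _ _ _
      rw [dist_comm] at h6
      linarith
    · rintro ⟨r, ⟨hr1, hrm⟩, rfl⟩
      exact hclu r hr1 hrm
  -- F equals the stated union
  have hFT : (F : Set ℝ) =
      {0} ∪ {y : ℝ | ∃ s : ℕ, 1 ≤ s ∧ s ≤ (m - 1) / 2 ∧ y = 2 * π ^ 2 * (s : ℝ) / L ^ 2}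
        ∪ {y : ℝ | ∃ t : ℕ, 1 ≤ t ∧ t ≤ (m - 1) / 2 ∧
            y = π ^ 2 * (2 * (t : ℝ) - 1) / L ^ 2} := by
    ext y
    simp only [hF, Finset.coe_image, Set.mem_image, Finset.mem_coe, Finset.mem_Icc,
      Set.mem_union, Set.mem_singleton_iff, Set.mem_setOf_eq]
    constructor
    · rintro ⟨r, ⟨hr1, hrm⟩, rfl⟩
      by_cases h1 : r ≤ (m - 1) / 2
      · -- value π²(2t−1)/L² with t = w + 1 − r
        right
        refine ⟨w + 1 - r, by omega, by omega, ?_⟩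
        have hcast : ((w + 1 - r : ℕ) : ℝ) = (w : ℝ) + 1 - r := by
          have : r ≤ w + 1 := by omega
          push_cast [this]; ring
        simp only [hℓ, if_pos h1, hcast, hmr]
        field_simp
        ring
      · by_cases h2 : r = m
        · left; left
          have h1' : ¬ (m ≤ (m - 1) / 2) := by omega
          rw [h2]
          simp [hℓ, if_neg h1', sub_self]
        · -- value 2π²s/L² with s = m − r
          left; right
          refine ⟨m - r, by omega, by omega, ?_⟩
          have hcast : ((m - r : ℕ) : ℝ) = (m : ℝ) - r := by
            have : r ≤ m := hrm
            push_cast [this]; ring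
          simp only [hℓ, if_neg h1, hcast]
          field_simp
    · rintro ((rfl | ⟨s, hs1, hsw, rfl⟩) | ⟨t, ht1, htw, rfl⟩)
      · refine ⟨m, ⟨by omega, le_refl m⟩, ?_⟩
        have h1 : ¬ (m ≤ (m - 1) / 2) := by omega
        simp [hℓ, if_neg h1]
      · refine ⟨m - s, ⟨by omega, by omega⟩, ?_⟩
        have h1 : ¬ (m - s ≤ (m - 1) / 2) := by omega
        have hcast : ((m - s : ℕ) : ℝ) = (m : ℝ) - s := by
          have : s ≤ m := by omega
          push_cast [this]; ring
        simp only [hℓ, if_neg h1, hcast]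
        field_simp
        ring
      · refine ⟨w + 1 - t, ⟨by omega, by omega⟩, ?_⟩
        have h1 : w + 1 - t ≤ (m - 1) / 2 := by omega
        have hcast : ((w + 1 - t : ℕ) : ℝ) = (w : ℝ) + 1 - t := by
          have : t ≤ w + 1 := by omega
          push_cast [this]; ring
        simp only [hℓ, if_pos h1, hcast, hmr]
        field_simp
        ring
  -- F as an image of an injective map, for cardinality
  have hFg : (F : Set ℝ) = (fun i : ℕ => π ^ 2 * (i : ℝ) / L ^ 2) '' Set.Iio m := by
    ext y
    simp only [hF, Finset.coe_image, Set.mem_image, Finset.mem_coe, Finset.mem_Icc,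
      Set.mem_Iio]
    constructor
    · rintro ⟨r, ⟨hr1, hrm⟩, rfl⟩
      by_cases h1 : r ≤ (m - 1) / 2
      · refine ⟨m - 2 * r, by omega, ?_⟩
        have hcast : ((m - 2 * r : ℕ) : ℝ) = (m : ℝ) - 2 * r := by
          have : 2 * r ≤ m := by omega
          push_cast [this]; ring
        simp only [hℓ, if_pos h1, hcast]
        field_simp
      · refine ⟨2 * (m - r), by omega, ?_⟩
        have hcast : ((2 * (m - r) : ℕ) : ℝ) = 2 * ((m : ℝ) - r) := by
          have : r ≤ m := hrm
          push_cast [this]; ring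
        simp only [hℓ, if_neg h1, hcast]
        field_simp
    · rintro ⟨i, him, rfl⟩
      rcases Nat.even_or_odd i with ⟨s, hs⟩ | ⟨t, ht⟩
      · by_cases hs0 : s = 0
        · refine ⟨m, ⟨by omega, le_refl m⟩, ?_⟩
          have h1 : ¬ (m ≤ (m - 1) / 2) := by omega
          simp [hℓ, if_neg h1, hs, hs0]
        · refine ⟨m - s, ⟨by omega, by omega⟩, ?_⟩
          have h1 : ¬ (m - s ≤ (m - 1) / 2) := by omega
          have hcast : ((m - s : ℕ) : ℝ) = (m : ℝ) - s := by
            have : s ≤ m := by omega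
            push_cast [this]; ring
          have hcasti : ((i : ℕ) : ℝ) = 2 * (s : ℝ) := by
            rw [hs]; push_cast; ring
          simp only [hℓ, if_neg h1, hcast, hcasti]
          field_simp
          ring
      · refine ⟨w - t, ⟨by omega, by omega⟩, ?_⟩
        have h1 : w - t ≤ (m - 1) / 2 := by omega
        have hcast : ((w - t : ℕ) : ℝ) = (w : ℝ) - t := by
          have : t ≤ w := by omega
          push_cast [this]; ring
        have hcasti : ((i : ℕ) : ℝ) = 2 * (t : ℝ) + 1 := by
          rw [ht]; push_cast; ring
        simp only [hℓ, if_pos h1, hcast, hcasti, hmr]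
        field_simp
        ring
  constructor
  · rw [hset, hFT]
  · rw [hset, hFg]
    rw [Set.ncard_image_of_injective _ ?_]
    · rw [← Finset.coe_Iio, Set.ncard_coe_finset, Nat.card_Iio]
    · intro i j hij
      field_simp at hij
      exact_mod_cast hij
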